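/- Let R : ℝ → ℝ be differentiable with R(t) > 0 and R'(t) ≥ 0 for all t ∈ ℝ, and suppose R(t) = R(t − 2·R(t)) for all t ∈ ℝ. Then R is constant. -/
import Mathlib


/-- Concluding step in the proof of Proposition 3 of the paper: a positive,
nondecreasing (in the sense `R' ≥ 0`) differentiable solution of
`R(t) = R(t - 2 R(t))` is constant. -/
theorem constant_of_nonneg_deriv_functional_equation
    (R : ℝ → ℝ) (hR : Differentiable ℝ R)
    (hRpos : ∀ t : ℝ, R t > 0)
    (hderiv : ∀ t : ℝ, deriv R t ≥ 0)
    (hfe : ∀ t : ℝ, R t = R (t - 2 * R t)) :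
    ∃ c : ℝ, ∀ t : ℝ, R t = c := by
  have hmono : Monotone R := by
    apply monotone_of_deriv_nonneg hR
    intro x; exact hderiv x
  have key : ∀ t : ℝ, ∀ n : ℕ, R (t - 2 * R t * n) = R t := by
    intro t n
    induction n with
    | zero => simp
    | succ n ih =>
      set s := t - 2 * R t * n with hs
      have h1 : R (s - 2 * R s) = R s := (hfe s).symm
      have h2 : s - 2 * R s = t - 2 * R t * (n + 1) := by
        rw [hs, ih]; ring
      push_cast; rw [← h2, h1, ih]
  have claim : ∀ t s : ℝ, s ≤ t → R s = R t := by
    intro t s hst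
    obtain ⟨n, hn⟩ := Archimedean.arch (t - s) (mul_pos two_pos (hRpos t))
    have hn' : t - 2 * R t * n ≤ s := by
      have : t - s ≤ n * (2 * R t) := by simpa [nsmul_eq_mul] using hn
      nlinarith
    have h1 : R (t - 2 * R t * n) ≤ R s := hmono hn'
    have h2 : R s ≤ R t := hmono hst
    rw [key t n] at h1
    linarith
  refine ⟨R 0, fun t => ?_⟩
  rcases le_total t 0 with h | h
  · exact claim 0 t h
  · exact (claim t 0 h).symm
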